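/- For every integer d ≥ 2, (1/π)·∫_{−π}^{π} φ⁴·u_d(φ) dφ ≤ (1/4 + (d+1)π²/(16(d+2)²))·π⁶/(d+2)³, and this quantity is at most π⁶/(2(d+2)³). -/

import Mathlib

open Real Finset intervalIntegral

/-- The Jackson damping factor `ρ_{j,d}`. -/
noncomputable def jacksonDamp (d j : ℕ) : ℝ :=
  Real.sin ((j + 1) * (π / (d + 2))) / ((d + 2) * Real.sin (π / (d + 2)))
    + (1 - (j + 1) / (d + 2)) * Real.cos (j * (π / (d + 2)))

/-- The Jackson kernel `u_d(φ) = 1/2 + Σ_{j=1}^d ρ_{j,d} cos(jφ)`. -/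
noncomputable def jacksonKernel (d : ℕ) (φ : ℝ) : ℝ :=
  1 / 2 + ∑ j ∈ Finset.Icc 1 d, jacksonDamp d j * Real.cos (j * φ)

section JacksonAux

/-- Expansion of `|Σ s_k e^{ikφ}|²` grouped by frequency differences. -/
lemma sq_sum_trig (s : ℕ → ℝ) (φ : ℝ) (n : ℕ) :
    (∑ k ∈ range n, s k * cos (k * φ)) ^ 2 + (∑ k ∈ range n, s k * sin (k * φ)) ^ 2
      = ∑ k ∈ range n, s k ^ 2
        + 2 * ∑ j ∈ range n, (∑ l ∈ range (n - 1 - j), s l * s (l + j + 1)) * cos ((j + 1) * φ) := by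
  induction n with
  | zero => simp
  | succ n ih =>
    rw [sum_range_succ (f := fun k => s k * cos (k * φ)),
        sum_range_succ (f := fun k => s k * sin (k * φ)), sum_range_succ (f := fun k => s k ^ 2)]
    have key : (∑ k ∈ range n, s k * cos (k * φ)) * (s n * cos (n * φ))
        + (∑ k ∈ range n, s k * sin (k * φ)) * (s n * sin (n * φ))
        = s n * ∑ k ∈ range n, s k * cos (((n : ℝ) - k) * φ) := by
      rw [Finset.sum_mul, Finset.sum_mul, ← Finset.sum_add_distrib, Finset.mul_sum]
      refine Finset.sum_congr rfl fun k _ => ?_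
      have : ((n : ℝ) - k) * φ = (n : ℝ) * φ - (k : ℝ) * φ := by ring
      rw [this, Real.cos_sub]; ring
    have pyth : Real.cos ((n : ℝ) * φ) ^ 2 + Real.sin ((n : ℝ) * φ) ^ 2 = 1 := by
      rw [add_comm]; exact Real.sin_sq_add_cos_sq _
    -- reindex the cross term
    have cross : ∑ k ∈ range n, s k * cos (((n : ℝ) - k) * φ)
        = ∑ j ∈ range n, s (n - 1 - j) * cos ((j + 1) * φ) := by
      rw [← Finset.sum_range_reflect (fun j => s (n - 1 - j) * cos ((j + 1) * φ)) n]
      refine Finset.sum_congr rfl fun k hk => ?_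
      have hk' : k < n := Finset.mem_range.mp hk
      have h1 : n - 1 - (n - 1 - k) = k := by omega
      rw [h1]
      congr 2
      have : ((n - 1 - k : ℕ) : ℝ) = (n : ℝ) - 1 - k := by
        have : (n - 1 - k : ℕ) = n - (1 + k) := by omega
        rw [this, Nat.cast_sub (by omega)]
        push_cast; ring
      rw [this]; ring
    -- the new RHS coefficient sums
    have rhs : ∑ j ∈ range (n + 1), (∑ l ∈ range (n + 1 - 1 - j), s l * s (l + j + 1)) * cos ((j + 1) * φ)
        = ∑ j ∈ range n, (∑ l ∈ range (n - 1 - j), s l * s (l + j + 1)) * cos ((j + 1) * φ)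
          + ∑ j ∈ range n, s (n - 1 - j) * s n * cos ((j + 1) * φ) := by
      rw [sum_range_succ]
      have htop : n + 1 - 1 - n = 0 := by omega
      rw [htop]
      simp only [range_zero, Finset.sum_empty, zero_mul, add_zero]
      rw [← Finset.sum_add_distrib]
      refine Finset.sum_congr rfl fun j hj => ?_
      have hj' : j < n := Finset.mem_range.mp hj
      have h1 : n + 1 - 1 - j = (n - 1 - j) + 1 := by omega
      rw [h1, sum_range_succ]
      have h2 : n - 1 - j + j + 1 = n := by omega
      rw [h2]; ring
    rw [rhs]
    have cross2 : ∑ j ∈ range n, s (n - 1 - j) * s n * cos ((j + 1) * φ)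
        = s n * ∑ j ∈ range n, s (n - 1 - j) * cos ((j + 1) * φ) := by
      rw [Finset.mul_sum]; exact Finset.sum_congr rfl fun j _ => by ring
    rw [cross2, ← cross]
    nlinarith [key, pyth, ih]

lemma sin_alpha_pos (m : ℕ) (hm : 2 ≤ m) : 0 < Real.sin (π / m) := by
  apply Real.sin_pos_of_pos_of_lt_pi
  · positivity
  · apply div_lt_self Real.pi_pos
    exact_mod_cast (by omega : 1 < m)

lemma cos_sum_tele (m j L : ℕ) (hm : 2 ≤ m) (hL : j + L + 1 = m) :
    ∑ l ∈ range L, Real.cos ((2 * l + j + 2) * (π / m))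
      = - Real.sin ((j + 1) * (π / m)) / Real.sin (π / m) := by
  set α := π / (m : ℝ) with hα
  have hs : Real.sin α ≠ 0 := (sin_alpha_pos m hm).ne'
  have per : ∀ l : ℕ, 2 * Real.sin α * Real.cos ((2 * l + j + 2) * α)
      = Real.sin ((2 * (l + 1) + j + 1 : ℝ) * α) - Real.sin ((2 * l + j + 1 : ℝ) * α) := by
    intro l
    have e1 : (2 * (l + 1) + j + 1 : ℝ) * α = (2 * l + j + 2) * α + α := by ring
    have e2 : (2 * (l : ℝ) + j + 1) * α = (2 * l + j + 2) * α - α := by ring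
    rw [e1, e2, Real.sin_add, Real.sin_sub]; ring
  have tele : ∑ l ∈ range L, (Real.sin ((2 * ((l : ℝ) + 1) + j + 1) * α)
      - Real.sin ((2 * (l : ℝ) + j + 1) * α))
      = Real.sin ((2 * (L : ℝ) + j + 1) * α) - Real.sin ((2 * (0 : ℝ) + j + 1) * α) := by
    have := Finset.sum_range_sub (fun l : ℕ => Real.sin ((2 * (l : ℝ) + j + 1) * α)) L
    simpa using this
  have top : Real.sin ((2 * (L : ℝ) + j + 1) * α) = - Real.sin ((j + 1) * α) := by
    have hLr : (L : ℝ) = m - 1 - j := by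
      have : (L : ℕ) = m - 1 - j := by omega
      rw [this, Nat.cast_sub (by omega), Nat.cast_sub (by omega)]; push_cast; ring
    have hm0 : (m : ℝ) ≠ 0 := by positivity
    have : (2 * (L : ℝ) + j + 1) * α = 2 * π - (j + 1) * α := by
      rw [hLr, hα]; field_simp; ring
    rw [this, Real.sin_sub, Real.sin_two_pi, Real.cos_two_pi]; ring
  have sums : 2 * Real.sin α * ∑ l ∈ range L, Real.cos ((2 * l + j + 2) * α)
      = - 2 * Real.sin ((j + 1) * α) := by
    rw [Finset.mul_sum]
    calc ∑ l ∈ range L, 2 * Real.sin α * Real.cos ((2 * l + j + 2) * α)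
        = ∑ l ∈ range L, (Real.sin ((2 * ((l : ℝ) + 1) + j + 1) * α)
            - Real.sin ((2 * (l : ℝ) + j + 1) * α)) := by
          refine Finset.sum_congr rfl fun l _ => ?_
          have := per l; push_cast at this ⊢; linarith [this]
      _ = Real.sin ((2 * (L : ℝ) + j + 1) * α) - Real.sin ((2 * (0 : ℝ) + j + 1) * α) := tele
      _ = - 2 * Real.sin ((j + 1) * α) := by rw [top]; push_cast; ring
  field_simp
  rw [mul_comm α ((j : ℝ) + 1)]; linarith [sums]

lemma coeff_eq (d jj : ℕ) (h1 : 1 ≤ jj) (h2 : jj ≤ d) :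
    ∑ l ∈ range (d + 1 - jj),
        Real.sin ((l + 1) * (π / (d + 2))) * Real.sin ((l + jj + 1) * (π / (d + 2)))
      = ((d : ℝ) + 2) / 2 * jacksonDamp d jj := by
  set α := π / ((d : ℝ) + 2) with hα
  have hcast : ((d : ℕ) + 2 : ℝ) = ((d + 2 : ℕ) : ℝ) := by push_cast; ring
  have hs : Real.sin α ≠ 0 := by
    rw [hα, hcast]; exact (sin_alpha_pos (d + 2) (by omega)).ne'
  have per : ∀ l : ℕ, Real.sin ((l + 1) * α) * Real.sin ((l + jj + 1) * α)
      = (Real.cos ((jj : ℝ) * α) - Real.cos ((2 * l + jj + 2) * α)) / 2 := by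
    intro l
    have e1 : (jj : ℝ) * α = ((l + jj + 1) * α) - ((l + 1) * α) := by ring
    have e2 : (2 * (l : ℝ) + jj + 2) * α = ((l + jj + 1) * α) + ((l + 1) * α) := by ring
    rw [e1, e2, Real.cos_sub, Real.cos_add]; ring
  have tele := cos_sum_tele (d + 2) jj (d + 1 - jj) (by omega) (by omega)
  rw [← hcast] at tele
  have hLr : ((d + 1 - jj : ℕ) : ℝ) = (d : ℝ) + 1 - jj := by
    rw [Nat.cast_sub (by omega)]; push_cast; ring
  calc ∑ l ∈ range (d + 1 - jj), Real.sin ((l + 1) * α) * Real.sin ((l + jj + 1) * α)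
      = ∑ l ∈ range (d + 1 - jj),
          (Real.cos ((jj : ℝ) * α) - Real.cos ((2 * l + jj + 2) * α)) / 2 := by
        exact Finset.sum_congr rfl fun l _ => per l
    _ = ((d + 1 - jj : ℕ) : ℝ) * (Real.cos ((jj : ℝ) * α) / 2)
        - (∑ l ∈ range (d + 1 - jj), Real.cos ((2 * l + jj + 2) * α)) / 2 := by
        simp only [sub_div, Finset.sum_sub_distrib, Finset.sum_const, nsmul_eq_mul,
          Finset.card_range, ← Finset.sum_div]
    _ = ((d : ℝ) + 2) / 2 * jacksonDamp d jj := by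
        rw [tele, hLr, jacksonDamp, ← hα]
        have h0 : (d : ℝ) + 2 ≠ 0 := by positivity
        field_simp
        ring

lemma diag_eq (d : ℕ) :
    ∑ k ∈ range (d + 1), Real.sin ((k + 1) * (π / (d + 2))) ^ 2 = ((d : ℝ) + 2) / 2 := by
  have hcast : ((d : ℝ) + 2) = ((d + 2 : ℕ) : ℝ) := by push_cast; ring
  have tele := cos_sum_tele (d + 2) 0 (d + 1) (by omega) (by omega)
  rw [← hcast] at tele
  have hs : Real.sin (π / ((d : ℝ) + 2)) ≠ 0 := by
    rw [hcast]; exact (sin_alpha_pos (d + 2) (by omega)).ne'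
  have tele2 : ∑ l ∈ range (d + 1), Real.cos ((2 * (l : ℝ) + 2) * (π / ((d : ℝ) + 2))) = -1 := by
    have h : ∑ l ∈ range (d + 1), Real.cos ((2 * (l : ℝ) + 2) * (π / ((d : ℝ) + 2)))
        = ∑ l ∈ range (d + 1), Real.cos ((2 * (l : ℝ) + (0:ℕ) + 2) * (π / ((d : ℝ) + 2))) := by
      refine Finset.sum_congr rfl fun l _ => ?_
      norm_num
    rw [h, tele]
    norm_num
    rw [neg_div, div_self hs]
  have per : ∀ k : ℕ, Real.sin (((k : ℝ) + 1) * (π / (d + 2))) ^ 2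
      = 1 / 2 - Real.cos ((2 * (k : ℝ) + 2) * (π / (d + 2))) / 2 := by
    intro k
    rw [Real.sin_sq_eq_half_sub]
    congr 2
    ring
  calc ∑ k ∈ range (d + 1), Real.sin ((k + 1) * (π / (d + 2))) ^ 2
      = ∑ k ∈ range (d + 1),
          (1 / 2 - Real.cos ((2 * (k : ℝ) + 2) * (π / (d + 2))) / 2) := by
        exact Finset.sum_congr rfl fun k _ => per k
    _ = ((d : ℝ) + 2) / 2 := by
        simp only [Finset.sum_sub_distrib, Finset.sum_const, Finset.card_range, nsmul_eq_mul,
          ← Finset.sum_div]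
        rw [tele2]
        push_cast; ring

lemma jacksonKernel_eq_sq (d : ℕ) (φ : ℝ) :
    ((d : ℝ) + 2) * jacksonKernel d φ
      = (∑ k ∈ range (d + 1), Real.sin ((k + 1) * (π / (d + 2))) * cos (k * φ)) ^ 2
        + (∑ k ∈ range (d + 1), Real.sin ((k + 1) * (π / (d + 2))) * sin (k * φ)) ^ 2 := by
  rw [sq_sum_trig (fun k => Real.sin ((k + 1) * (π / (d + 2)))) φ (d + 1)]
  rw [diag_eq]
  have split : ∑ j ∈ range (d + 1),
      (∑ l ∈ range (d + 1 - 1 - j), Real.sin ((l + 1) * (π / (d + 2)))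
        * Real.sin (((l + j + 1 : ℕ) + 1) * (π / (d + 2)))) * cos ((j + 1) * φ)
      = ∑ j ∈ range d, ((d : ℝ) + 2) / 2 * jacksonDamp d (j + 1) * cos ((j + 1) * φ) := by
    rw [Finset.sum_range_succ]
    have : d + 1 - 1 - d = 0 := by omega
    rw [this]
    simp only [range_zero, Finset.sum_empty, zero_mul, add_zero]
    refine Finset.sum_congr rfl fun j hj => ?_
    have hj' : j < d := Finset.mem_range.mp hj
    have h1 : d + 1 - 1 - j = d + 1 - (j + 1) := by omega
    rw [h1]
    congr 1
    have := coeff_eq d (j + 1) (by omega) (by omega)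
    rw [← this]
    refine Finset.sum_congr rfl fun l _ => ?_
    congr 2
    push_cast; ring
  rw [split]
  rw [jacksonKernel]
  have icc : ∑ j ∈ Finset.Icc 1 d, jacksonDamp d j * Real.cos (j * φ)
      = ∑ j ∈ range d, jacksonDamp d (j + 1) * Real.cos (((j : ℝ) + 1) * φ) := by
    rw [← Finset.Ico_add_one_right_eq_Icc, Finset.sum_Ico_eq_sum_range]
    refine Finset.sum_congr rfl fun j _ => ?_
    rw [add_comm 1 j]
    congr 1
    push_cast; ring
  rw [icc, mul_add, Finset.mul_sum, Finset.mul_sum]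
  congr 1
  · ring
  · refine Finset.sum_congr rfl fun j _ => ?_
    ring

lemma jacksonKernel_nonneg (d : ℕ) (φ : ℝ) : 0 ≤ jacksonKernel d φ := by
  have h := jacksonKernel_eq_sq d φ
  have hm : (0 : ℝ) < (d : ℝ) + 2 := by positivity
  nlinarith [sq_nonneg (∑ k ∈ range (d + 1), Real.sin ((k + 1) * (π / (d + 2))) * cos (k * φ)),
    sq_nonneg (∑ k ∈ range (d + 1), Real.sin ((k + 1) * (π / (d + 2))) * sin (k * φ))]

lemma jacksonKernel_continuous (d : ℕ) : Continuous (jacksonKernel d) := by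
  unfold jacksonKernel
  refine continuous_const.add (continuous_finset_sum _ fun j _ => ?_)
  exact continuous_const.mul (Real.continuous_cos.comp (continuous_const.mul continuous_id))

lemma int_cos_real (c : ℝ) (hc : c ≠ 0) :
    ∫ φ in (-π)..π, Real.cos (c * φ) = 2 * Real.sin (c * π) / c := by
  rw [intervalIntegral.integral_comp_mul_left (fun x => Real.cos x) hc]
  rw [integral_cos]
  rw [smul_eq_mul]
  rw [mul_neg, Real.sin_neg]
  field_simp
  ring

lemma sin_natsub_mul_pi (k j : ℕ) : Real.sin (((k : ℝ) - j) * π) = 0 := by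
  rw [sub_mul, Real.sin_sub, Real.sin_nat_mul_pi, Real.sin_nat_mul_pi]
  ring

lemma int_cos_nat (n : ℕ) (hn : 1 ≤ n) : ∫ φ in (-π)..π, Real.cos (n * φ) = 0 := by
  have hne : (n : ℝ) ≠ 0 := by exact_mod_cast (by omega : n ≠ 0)
  rw [int_cos_real n hne]
  rw [Real.sin_nat_mul_pi]
  ring

lemma int_coscos (k j : ℕ) (hk : 1 ≤ k) (hj : 1 ≤ j) :
    ∫ φ in (-π)..π, Real.cos (k * φ) * Real.cos (j * φ)
      = if k = j then π else 0 := by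
  have hpt : ∀ φ : ℝ, Real.cos (k * φ) * Real.cos (j * φ)
      = (Real.cos (((k + j : ℕ) : ℝ) * φ) + Real.cos (((k : ℝ) - j) * φ)) / 2 := by
    intro φ
    have e1 : ((k + j : ℕ) : ℝ) * φ = (k : ℝ) * φ + (j : ℝ) * φ := by push_cast; ring
    have e2 : ((k : ℝ) - j) * φ = (k : ℝ) * φ - (j : ℝ) * φ := by ring
    rw [e1, e2, Real.cos_add, Real.cos_sub]; ring
  rw [intervalIntegral.integral_congr (g := fun φ =>
    (Real.cos (((k + j : ℕ) : ℝ) * φ) + Real.cos (((k : ℝ) - j) * φ)) / 2)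
    (fun φ _ => hpt φ)]
  have i1 : IntervalIntegrable (fun φ => Real.cos (((k + j : ℕ) : ℝ) * φ)) MeasureTheory.volume (-π) π :=
    (Real.continuous_cos.comp (continuous_const.mul continuous_id)).intervalIntegrable _ _
  have i2 : IntervalIntegrable (fun φ => Real.cos (((k : ℝ) - j) * φ)) MeasureTheory.volume (-π) π :=
    (Real.continuous_cos.comp (continuous_const.mul continuous_id)).intervalIntegrable _ _
  simp only [div_eq_mul_inv]
  rw [intervalIntegral.integral_mul_const, intervalIntegral.integral_add i1 i2]
  rw [int_cos_nat (k + j) (by omega)]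
  by_cases h : k = j
  · subst h
    simp only [sub_self, zero_mul, Real.cos_zero, if_pos rfl]
    rw [intervalIntegral.integral_const]
    simp
    ring
  · rw [if_neg h]
    rw [int_cos_real ((k : ℝ) - j) (by
      intro hc
      apply h
      have : (k : ℝ) = j := by linarith
      exact_mod_cast this)]
    rw [sin_natsub_mul_pi]
    ring

lemma integrable_cos_mul_kernel (d : ℕ) (g : ℝ → ℝ) (hg : Continuous g) :
    IntervalIntegrable (fun φ => g φ * jacksonKernel d φ) MeasureTheory.volume (-π) π :=
  (hg.mul (jacksonKernel_continuous d)).intervalIntegrable _ _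

lemma int_g_kernel (d : ℕ) (g : ℝ → ℝ) (c₀ : ℝ) (c : ℕ → ℝ) (hg : Continuous g)
    (h0 : ∫ φ in (-π)..π, g φ = 2 * c₀)
    (hcos : ∀ j ∈ Finset.Icc 1 d, (∫ φ in (-π)..π, g φ * Real.cos (j * φ)) = c j) :
    ∫ φ in (-π)..π, g φ * jacksonKernel d φ
      = c₀ + ∑ j ∈ Finset.Icc 1 d, jacksonDamp d j * c j := by
  have hpt : ∀ φ : ℝ, g φ * jacksonKernel d φ
      = g φ * (1/2) + ∑ j ∈ Finset.Icc 1 d, jacksonDamp d j * (g φ * Real.cos (j * φ)) := by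
    intro φ
    rw [jacksonKernel, mul_add, Finset.mul_sum]
    congr 1
    exact Finset.sum_congr rfl fun j _ => by ring
  rw [intervalIntegral.integral_congr (g := fun φ =>
      g φ * (1/2) + ∑ j ∈ Finset.Icc 1 d, jacksonDamp d j * (g φ * Real.cos (j * φ)))
      (fun φ _ => hpt φ)]
  have i1 : IntervalIntegrable (fun φ => g φ * (1/2)) MeasureTheory.volume (-π) π :=
    (hg.mul continuous_const).intervalIntegrable _ _
  have i2 : ∀ j ∈ Finset.Icc 1 d, IntervalIntegrable
      (fun φ => jacksonDamp d j * (g φ * Real.cos (j * φ))) MeasureTheory.volume (-π) π := by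
    intro j _
    exact (continuous_const.mul (hg.mul
      (Real.continuous_cos.comp (continuous_const.mul continuous_id)))).intervalIntegrable _ _
  have isum : IntervalIntegrable
      (fun φ => ∑ j ∈ Finset.Icc 1 d, jacksonDamp d j * (g φ * Real.cos (j * φ)))
      MeasureTheory.volume (-π) π := by
    refine (continuous_finset_sum _ fun j _ => ?_).intervalIntegrable _ _
    exact continuous_const.mul (hg.mul
      (Real.continuous_cos.comp (continuous_const.mul continuous_id)))
  rw [intervalIntegral.integral_add i1 isum,
    intervalIntegral.integral_finset_sum i2, intervalIntegral.integral_mul_const, h0]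
  congr 1
  · ring
  refine Finset.sum_congr rfl fun j hj => ?_
  rw [intervalIntegral.integral_const_mul, hcos j hj]

lemma cont_cosk (k : ℕ) : Continuous fun φ : ℝ => Real.cos ((k : ℝ) * φ) :=
  Real.continuous_cos.comp (continuous_const.mul continuous_id)

/-- zeroth moment -/
lemma moment0 (d : ℕ) : ∫ φ in (-π)..π, jacksonKernel d φ = π := by
  have h := int_g_kernel d (fun _ => 1) π (fun _ => 0) continuous_const
    (by rw [intervalIntegral.integral_const]; simp; ring)
    (fun j hj => by
      have h1 : 1 ≤ j := (Finset.mem_Icc.mp hj).1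
      simpa using int_cos_nat j h1)
  simpa using h

/-- cos-k moment for k = 1, 2 -/
lemma momentk (d k : ℕ) (hk : 1 ≤ k) (hkd : k ≤ d) :
    ∫ φ in (-π)..π, Real.cos ((k : ℝ) * φ) * jacksonKernel d φ = π * jacksonDamp d k := by
  have h := int_g_kernel d (fun φ => Real.cos ((k : ℝ) * φ)) 0
    (fun j => if k = j then π else 0) (cont_cosk k)
    (by simpa using int_cos_nat k hk)
    (fun j hj => int_coscos k j hk (Finset.mem_Icc.mp hj).1)
  rw [h, zero_add]
  have : ∀ j ∈ Finset.Icc 1 d, jacksonDamp d j * (if k = j then π else 0)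
      = if k = j then jacksonDamp d j * π else 0 := fun j _ => by
    split <;> simp
  rw [Finset.sum_congr rfl this, Finset.sum_ite_eq (Finset.Icc 1 d) k
    (fun j => jacksonDamp d j * π)]
  rw [if_pos (Finset.mem_Icc.mpr ⟨hk, hkd⟩)]
  ring


lemma damp1_eq (d : ℕ) : jacksonDamp d 1 = Real.cos (π / (d + 2)) := by
  set α := π / ((d : ℝ) + 2) with hα
  have hcast : ((d : ℝ) + 2) = ((d + 2 : ℕ) : ℝ) := by push_cast; ring
  have hs : Real.sin α ≠ 0 := by rw [hα, hcast]; exact (sin_alpha_pos (d + 2) (by omega)).ne'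
  rw [jacksonDamp]
  have e1 : ((1 : ℕ) : ℝ) + 1 = 2 := by norm_num
  have e2 : ((1 : ℕ) : ℝ) = 1 := by norm_num
  rw [e1, e2, ← hα, one_mul, Real.sin_two_mul]
  have hm : ((d : ℝ) + 2) ≠ 0 := by positivity
  field_simp
  ring

lemma damp2_eq (d : ℕ) : jacksonDamp d 2
    = (1 + ((d : ℝ) + 1) * Real.cos (2 * (π / (d + 2)))) / ((d : ℝ) + 2) := by
  set α := π / ((d : ℝ) + 2) with hα
  have hcast : ((d : ℝ) + 2) = ((d + 2 : ℕ) : ℝ) := by push_cast; ring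
  have hs : Real.sin α ≠ 0 := by rw [hα, hcast]; exact (sin_alpha_pos (d + 2) (by omega)).ne'
  rw [jacksonDamp]
  have e1 : ((2 : ℕ) : ℝ) + 1 = 3 := by norm_num
  have e2 : ((2 : ℕ) : ℝ) = 2 := by norm_num
  rw [e1, e2, ← hα]
  have h3 : Real.sin (3 * α) = Real.sin α * (1 + 2 * Real.cos (2 * α)) := by
    have : (3 : ℝ) * α = 2 * α + α := by ring
    rw [this, Real.sin_add, Real.sin_two_mul, Real.cos_two_mul]
    nlinarith [Real.sin_sq_add_cos_sq α]
  rw [h3]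
  have hm : ((d : ℝ) + 2) ≠ 0 := by positivity
  field_simp
  ring

/-- the key algebraic form of `3/2 - 2ρ₁ + ρ₂/2` -/
lemma E_eq (d : ℕ) :
    3 / 2 - 2 * jacksonDamp d 1 + jacksonDamp d 2 / 2
      = 4 * Real.sin (π / (d + 2) / 2) ^ 2
          * (1 + ((d : ℝ) + 1) * Real.sin (π / (d + 2) / 2) ^ 2) / ((d : ℝ) + 2) := by
  set α := π / ((d : ℝ) + 2) with hα
  set t := Real.sin (α / 2) with ht
  set c := Real.cos (α / 2) with hc
  have h2 : 2 * (α / 2) = α := by ring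
  have hsin : Real.sin α = 2 * t * c := by
    rw [ht, hc, ← Real.sin_two_mul, h2]
  have hcos : Real.cos α = 1 - 2 * t ^ 2 := by
    have hs2 := Real.sin_sq_eq_half_sub (α / 2)
    rw [h2, ← ht] at hs2; linarith
  have hc2 : c ^ 2 = 1 - t ^ 2 := by
    have := Real.sin_sq_add_cos_sq (α / 2); rw [← ht, ← hc] at this; linarith
  have hsin2 : Real.sin α ^ 2 = 4 * t ^ 2 * (1 - t ^ 2) := by
    rw [hsin, show (2 * t * c) ^ 2 = 4 * t ^ 2 * c ^ 2 from by ring, hc2]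
  have hcos2 : Real.cos (2 * α) = 1 - 8 * t ^ 2 * (1 - t ^ 2) := by
    have hs3 := Real.sin_sq_eq_half_sub α
    rw [hsin2] at hs3; linarith
  have hm : ((d : ℝ) + 2) ≠ 0 := by positivity
  rw [damp1_eq, damp2_eq, ← hα, hcos, hcos2]
  field_simp
  ring

/-- pointwise bound `φ⁴ ≤ (π⁴/4)(1 − cos φ)²` on `[-π, π]` -/
lemma pointwise_bound {φ : ℝ} (h : |φ| ≤ π) :
    φ ^ 4 ≤ π ^ 4 / 4 * (1 - Real.cos φ) ^ 2 := by
  have h1 : 2 / π ^ 2 * φ ^ 2 ≤ 1 - Real.cos φ := by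
    have := Real.cos_le_one_sub_mul_cos_sq h
    linarith
  have h2 : (2 / π ^ 2 * φ ^ 2) ^ 2 ≤ (1 - Real.cos φ) ^ 2 := by
    apply pow_le_pow_left₀ (by positivity) h1
  have hπ : (0 : ℝ) < π := Real.pi_pos
  have h3 : (2 / π ^ 2 * φ ^ 2) ^ 2 = 4 * φ ^ 4 / π ^ 4 := by
    field_simp; ring
  rw [h3] at h2
  calc φ ^ 4 = π ^ 4 / 4 * (4 * φ ^ 4 / π ^ 4) := by field_simp
    _ ≤ π ^ 4 / 4 * (1 - Real.cos φ) ^ 2 := by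
        apply mul_le_mul_of_nonneg_left h2 (by positivity)

/-- integral of the majorant -/
lemma majorant_int (d : ℕ) (hd : 2 ≤ d) :
    ∫ φ in (-π)..π, (1 - Real.cos φ) ^ 2 * jacksonKernel d φ
      = π * (3 / 2 - 2 * jacksonDamp d 1 + jacksonDamp d 2 / 2) := by
  have hpt : ∀ φ : ℝ, (1 - Real.cos φ) ^ 2 * jacksonKernel d φ
      = (3 / 2) * jacksonKernel d φ
        - 2 * (Real.cos (((1 : ℕ) : ℝ) * φ) * jacksonKernel d φ)
        + (1 / 2) * (Real.cos (((2 : ℕ) : ℝ) * φ) * jacksonKernel d φ) := by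
    intro φ
    have e2 : Real.cos (((2 : ℕ) : ℝ) * φ) = 2 * Real.cos φ ^ 2 - 1 := by
      rw [show ((2 : ℕ) : ℝ) * φ = 2 * φ by push_cast; ring, Real.cos_two_mul]
    have e1 : Real.cos (((1 : ℕ) : ℝ) * φ) = Real.cos φ := by norm_num
    rw [e1, e2]; ring
  rw [intervalIntegral.integral_congr (g := fun φ =>
      (3 / 2) * jacksonKernel d φ
        - 2 * (Real.cos (((1 : ℕ) : ℝ) * φ) * jacksonKernel d φ)
        + (1 / 2) * (Real.cos (((2 : ℕ) : ℝ) * φ) * jacksonKernel d φ)) (fun φ _ => hpt φ)]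
  have i0 : IntervalIntegrable (fun φ => (3 / 2) * jacksonKernel d φ)
      MeasureTheory.volume (-π) π :=
    (continuous_const.mul (jacksonKernel_continuous d)).intervalIntegrable _ _
  have i1 : IntervalIntegrable (fun φ => 2 * (Real.cos (((1 : ℕ) : ℝ) * φ) * jacksonKernel d φ))
      MeasureTheory.volume (-π) π :=
    (continuous_const.mul ((Real.continuous_cos.comp (continuous_const.mul continuous_id)).mul
      (jacksonKernel_continuous d))).intervalIntegrable _ _
  have i2 : IntervalIntegrable (fun φ => (1 / 2) * (Real.cos (((2 : ℕ) : ℝ) * φ) * jacksonKernel d φ))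
      MeasureTheory.volume (-π) π :=
    (continuous_const.mul ((Real.continuous_cos.comp (continuous_const.mul continuous_id)).mul
      (jacksonKernel_continuous d))).intervalIntegrable _ _
  rw [intervalIntegral.integral_add (i0.sub i1) i2, intervalIntegral.integral_sub i0 i1,
    intervalIntegral.integral_const_mul, intervalIntegral.integral_const_mul,
    intervalIntegral.integral_const_mul, moment0,
    momentk d 1 le_rfl (by omega), momentk d 2 (by omega) hd]
  ring


end JacksonAux

/-- `(1/π)·∫_{−π}^{π} φ⁴·u_d(φ) dφ ≤ (1/4 + (d+1)π²/(16(d+2)²))·π⁶/(d+2)³`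
and this quantity is at most `π⁶/(2(d+2)³)`, for `d ≥ 2`. -/
theorem jacksonKernel_fourth_moment (d : ℕ) (hd : 2 ≤ d) :
    (1 / π) * ∫ φ in (-π)..π, φ ^ 4 * jacksonKernel d φ ≤
      (1 / 4 + (d + 1) * π ^ 2 / (16 * (d + 2) ^ 2)) * π ^ 6 / (d + 2) ^ 3 ∧
    (1 / 4 + (d + 1) * π ^ 2 / (16 * (d + 2) ^ 2)) * π ^ 6 / (d + 2) ^ 3 ≤
      π ^ 6 / (2 * (d + 2) ^ 3) := by

  have hπ : (0 : ℝ) < π := Real.pi_pos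
  have hm : (0 : ℝ) < (d : ℝ) + 2 := by positivity
  constructor
  · -- first inequality
    have hmono : (∫ φ in (-π)..π, φ ^ 4 * jacksonKernel d φ)
        ≤ ∫ φ in (-π)..π, (π ^ 4 / 4 * (1 - Real.cos φ) ^ 2) * jacksonKernel d φ := by
      apply intervalIntegral.integral_mono_on (by linarith)
      · exact ((continuous_pow 4).mul (jacksonKernel_continuous d)).intervalIntegrable _ _
      · exact ((continuous_const.mul ((continuous_const.sub Real.continuous_cos).pow 2)).mul
          (jacksonKernel_continuous d)).intervalIntegrable _ _
      · intro φ hφ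
        have habs : |φ| ≤ π := by
          rw [abs_le]; exact ⟨hφ.1, hφ.2⟩
        exact mul_le_mul_of_nonneg_right (pointwise_bound habs) (jacksonKernel_nonneg d φ)
    have hmaj : ∫ φ in (-π)..π, (π ^ 4 / 4 * (1 - Real.cos φ) ^ 2) * jacksonKernel d φ
        = π ^ 4 / 4 * (π * (3 / 2 - 2 * jacksonDamp d 1 + jacksonDamp d 2 / 2)) := by
      rw [← majorant_int d hd, ← intervalIntegral.integral_const_mul]
      congr 1; ext φ; ring
    have step1 : (1 / π) * ∫ φ in (-π)..π, φ ^ 4 * jacksonKernel d φ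
        ≤ π ^ 4 / 4 * (3 / 2 - 2 * jacksonDamp d 1 + jacksonDamp d 2 / 2) := by
      calc (1 / π) * ∫ φ in (-π)..π, φ ^ 4 * jacksonKernel d φ
          ≤ (1 / π) * (π ^ 4 / 4 * (π * (3 / 2 - 2 * jacksonDamp d 1 + jacksonDamp d 2 / 2))) :=
            mul_le_mul_of_nonneg_left (hmono.trans_eq hmaj) (by positivity)
        _ = π ^ 4 / 4 * (3 / 2 - 2 * jacksonDamp d 1 + jacksonDamp d 2 / 2) := by
            field_simp
    refine step1.trans ?_
    rw [E_eq]
    set t := Real.sin (π / ((d : ℝ) + 2) / 2) with ht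
    have hα2 : 0 < π / ((d : ℝ) + 2) / 2 := by positivity
    have htle : t ≤ π / ((d : ℝ) + 2) / 2 := (Real.sin_lt hα2).le
    have ht0 : 0 ≤ t := by
      apply Real.sin_nonneg_of_nonneg_of_le_pi hα2.le
      have hle1 : π / ((d : ℝ) + 2) ≤ π := div_le_self hπ.le (by linarith)
      linarith
    have hT2 : t ^ 2 ≤ (π / ((d : ℝ) + 2) / 2) ^ 2 := pow_le_pow_left₀ ht0 htle 2
    have rhs_eq : (1 / 4 + ((d : ℝ) + 1) * π ^ 2 / (16 * ((d : ℝ) + 2) ^ 2)) * π ^ 6 / ((d : ℝ) + 2) ^ 3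
        = π ^ 4 / 4 * (4 * (π / ((d : ℝ) + 2) / 2) ^ 2
            * (1 + ((d : ℝ) + 1) * (π / ((d : ℝ) + 2) / 2) ^ 2) / ((d : ℝ) + 2)) := by
      field_simp
      ring
    rw [rhs_eq]
    gcongr
  · -- second inequality
    have hπ4 : π ≤ 4 := by
      have := Real.pi_lt_d2
      linarith
    have hπsq : π ^ 2 ≤ 16 := by nlinarith
    have hX : (1 / 4 + ((d : ℝ) + 1) * π ^ 2 / (16 * ((d : ℝ) + 2) ^ 2)) ≤ 1 / 2 := by
      have hq : ((d : ℝ) + 1) * π ^ 2 ≤ 4 * ((d : ℝ) + 2) ^ 2 := by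
        have hd0 : (0 : ℝ) ≤ (d : ℝ) := Nat.cast_nonneg d
        nlinarith
      have h4 : ((d : ℝ) + 1) * π ^ 2 / (16 * ((d : ℝ) + 2) ^ 2) ≤ 1 / 4 := by
        rw [div_le_iff₀ (by positivity : (0 : ℝ) < 16 * ((d : ℝ) + 2) ^ 2)]
        linarith
      linarith
    rw [div_le_div_iff₀ (by positivity) (by positivity)]
    nlinarith [mul_le_mul_of_nonneg_right hX
      (le_of_lt (by positivity : (0 : ℝ) < π ^ 6 * ((d : ℝ) + 2) ^ 3))]
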